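/- The set of fully bounded cuttable 2-permutations is a 2-permutation class: for every fully bounded cuttable 2-permutation σ of degree n and every nonempty subset L ⊆ {1,…,n}, the restriction σ^{|L} is fully bounded cuttable. -/

import Mathlib

/-- `σ` is a `k`-permutation of degree `n`: a word over the alphabet `{1, …, n}`
in which every value `i ∈ {1, …, n}` occurs exactly `k` times (and no other
letter occurs). -/
def IsMultiPerm (k n : ℕ) (σ : List ℕ) : Prop :=
  ∀ i : ℕ, σ.count i = if 1 ≤ i ∧ i ≤ n then k else 0

/-- The restriction `σ^{|L}` of a multipermutation `σ` to a set `L` of values: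
delete all letters whose value is not in `L`, and replace, for each `x`, the
`x`-th smallest element of `L` by `x`. -/
def restrict (σ : List ℕ) (L : Finset ℕ) : List ℕ :=
  (σ.filter fun x => decide (x ∈ L)).map fun x => (L.filter fun y => y ≤ x).card

/-- `γ` is a bounded cut of the `2`-permutation `σ` of degree `n`:
`1 ≤ γ ≤ n - 1` and `σ = f·μ·ν·l` where `f` and `l` are the first and last
letters of `σ` and `μ`, `ν` are words such that every letter of `μ` is at most
`γ` and every letter of `ν` is greater than `γ`. -/
def IsBoundedCut (n : ℕ) (σ : List ℕ) (γ : ℕ) : Prop :=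
  1 ≤ γ ∧ γ ≤ n - 1 ∧
    ∃ (f l : ℕ) (μ ν : List ℕ),
      σ = f :: (μ ++ ν ++ [l]) ∧ (∀ x ∈ μ, x ≤ γ) ∧ (∀ x ∈ ν, γ < x)

/-- A `2`-permutation of degree `n` is bounded cuttable if it has a bounded cut. -/
def BoundedCuttable (n : ℕ) (σ : List ℕ) : Prop :=
  ∃ γ, IsBoundedCut n σ γ

/-- A `2`-permutation of degree `n` is fully bounded cuttable if its restriction
to every interval `{a, …, b} ⊆ {1, …, n}` with `a < b` is bounded cuttable. -/
def FullyBoundedCuttable (n : ℕ) (σ : List ℕ) : Prop :=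
  ∀ a b : ℕ, 1 ≤ a → a < b → b ≤ n →
    BoundedCuttable (Finset.Icc a b).card (restrict σ (Finset.Icc a b))

def rk (K : Finset ℕ) (x : ℕ) : ℕ := (K.filter fun y => y ≤ x).card

lemma restrict_eq (σ : List ℕ) (L : Finset ℕ) :
    restrict σ L = (σ.filter fun x => decide (x ∈ L)).map (rk L) := rfl

lemma rk_mono (K : Finset ℕ) {x y : ℕ} (h : x ≤ y) : rk K x ≤ rk K y :=
  Finset.card_le_card (fun z hz => by
    simp only [Finset.mem_filter] at *; exact ⟨hz.1, hz.2.trans h⟩)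

lemma rk_lt (K : Finset ℕ) {x y : ℕ} (h : x < y) (hy : y ∈ K) : rk K x < rk K y := by
  apply Finset.card_lt_card
  constructor
  · exact fun z hz => by
      simp only [Finset.mem_filter] at *; exact ⟨hz.1, hz.2.trans h.le⟩
  · intro hsub
    have := hsub (by simp [Finset.mem_filter, hy] : y ∈ K.filter fun z => z ≤ y)
    simp only [Finset.mem_filter] at this
    omega

lemma le_iff_rk_le (K : Finset ℕ) {x y : ℕ} (hx : x ∈ K) (hy : y ∈ K) :
    x ≤ y ↔ rk K x ≤ rk K y := by
  constructor
  · exact rk_mono K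
  · intro h
    by_contra hc
    exact absurd h (Nat.not_le.2 (rk_lt K (Nat.lt_of_not_le hc) hx))

lemma rk_injOn (K : Finset ℕ) : Set.InjOn (rk K) K := by
  intro x hx y hy h
  rcases Nat.lt_trichotomy x y with h1 | h1 | h1
  · exact absurd h (Nat.ne_of_lt (rk_lt K h1 hy))
  · exact h1
  · exact absurd h.symm (Nat.ne_of_lt (rk_lt K h1 hx))

lemma one_le_rk (K : Finset ℕ) {x : ℕ} (hx : x ∈ K) : 1 ≤ rk K x := by
  have : x ∈ K.filter fun y => y ≤ x := by simp [hx]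
  exact Finset.card_pos.2 ⟨x, this⟩

lemma rk_le_card (K : Finset ℕ) (x : ℕ) : rk K x ≤ K.card :=
  Finset.card_le_card (Finset.filter_subset _ _)

lemma rk_image (K : Finset ℕ) : K.image (rk K) = Finset.Icc 1 K.card := by
  apply Finset.eq_of_subset_of_card_le
  · intro c hc
    simp only [Finset.mem_image] at hc
    obtain ⟨x, hx, rfl⟩ := hc
    exact Finset.mem_Icc.2 ⟨one_le_rk K hx, rk_le_card K x⟩
  · rw [Nat.card_Icc, Finset.card_image_of_injOn (rk_injOn K)]
    omega


lemma rk_rk (K M : Finset ℕ) (hM : M ⊆ K.image (rk K)) {x : ℕ}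
    (hx : x ∈ K.filter fun x => rk K x ∈ M) :
    rk M (rk K x) = rk (K.filter fun x => rk K x ∈ M) x := by
  set K' : Finset ℕ := K.filter fun x => rk K x ∈ M with hK'
  simp only [Finset.mem_filter, hK'] at hx
  have himg : (K'.filter fun y => y ≤ x).image (rk K) = M.filter fun c => c ≤ rk K x := by
    apply Finset.ext
    intro c
    simp only [Finset.mem_image, Finset.mem_filter, hK']
    constructor
    · rintro ⟨y, ⟨⟨hyK, hyM⟩, hyx⟩, rfl⟩
      exact ⟨hyM, rk_mono K hyx⟩
    · rintro ⟨hcM, hcx⟩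
      obtain ⟨y, hyK, rfl⟩ := Finset.mem_image.1 (hM hcM)
      exact ⟨y, ⟨⟨hyK, hcM⟩, (le_iff_rk_le K hyK hx.1).2 hcx⟩, rfl⟩
  have hinj : Set.InjOn (rk K) (K'.filter fun y => y ≤ x) := by
    intro a ha b hb
    simp only [Finset.coe_filter, Set.mem_setOf_eq, hK', Finset.mem_filter] at ha hb
    exact rk_injOn K ha.1.1 hb.1.1
  show (M.filter fun c => c ≤ rk K x).card = (K'.filter fun y => y ≤ x).card
  rw [← himg, Finset.card_image_of_injOn hinj]

lemma restrict_restrict (σ : List ℕ) (K M : Finset ℕ) (hM : M ⊆ K.image (rk K)) :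
    restrict (restrict σ K) M = restrict σ (K.filter fun x => rk K x ∈ M) := by
  set K' : Finset ℕ := K.filter fun x => rk K x ∈ M with hK'
  rw [restrict_eq, restrict_eq, restrict_eq, List.filter_map, List.map_map,
    List.filter_filter]
  have hfil : (σ.filter fun a => ((fun x => decide (x ∈ M)) ∘ rk K) a && decide (a ∈ K))
      = σ.filter fun x => decide (x ∈ K') := by
    apply List.filter_congr
    intro x _
    simp [hK', Finset.mem_filter, Bool.and_comm]
  rw [hfil]
  apply List.map_congr_left
  intro x hx
  simp only [List.mem_filter, decide_eq_true_eq] at hx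
  exact rk_rk K M hM hx.2

-- splitting machinery
lemma pairwise_split {γ : ℕ} {l : List ℕ} (h : l.Pairwise fun x y => γ < x → γ < y) :
    ∃ A B : List ℕ, l = A ++ B ∧ (∀ x ∈ A, x ≤ γ) ∧ (∀ x ∈ B, γ < x) := by
  induction l with
  | nil => exact ⟨[], [], rfl, by simp, by simp⟩
  | cons a t ih =>
    rw [List.pairwise_cons] at h
    by_cases ha : γ < a
    · exact ⟨[], a :: t, rfl, by simp, by
        intro x hx
        rcases List.mem_cons.1 hx with rfl | hx
        · exact ha
        · exact h.1 x hx ha⟩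
    · obtain ⟨A, B, rfl, hA, hB⟩ := ih h.2
      exact ⟨a :: A, B, rfl, by
        intro x hx
        rcases List.mem_cons.1 hx with rfl | hx
        · omega
        · exact hA x hx, hB⟩

lemma sublist_tail {α : Type*} {S T : List α} (h : S.Sublist T) : S.tail.Sublist T.tail := by
  induction h with
  | slnil => simp
  | cons a h ih =>
    exact (List.tail_sublist _).trans h
  | cons_cons a h ih => exact h

lemma sublist_dropLast {α : Type*} {S T : List α} (h : S.Sublist T) :
    S.dropLast.Sublist T.dropLast := by
  have := (sublist_tail h.reverse).reverse
  rwa [List.tail_reverse, List.tail_reverse, List.reverse_reverse, List.reverse_reverse] at this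

lemma cut_of_pairwise {τ : List ℕ} {γ : ℕ} (hlen : 2 ≤ τ.length)
    (hp : (τ.tail.dropLast).Pairwise fun x y => γ < x → γ < y) :
    ∃ (f l : ℕ) (μ ν : List ℕ),
      τ = f :: (μ ++ ν ++ [l]) ∧ (∀ x ∈ μ, x ≤ γ) ∧ (∀ x ∈ ν, γ < x) := by
  obtain ⟨f, t, rfl⟩ : ∃ f t, τ = f :: t := by
    cases τ with
    | nil => simp at hlen
    | cons a t => exact ⟨a, t, rfl⟩
  have ht : t ≠ [] := by
    intro h
    subst h
    simp at hlen
  obtain ⟨A, B, hAB, hA, hB⟩ := pairwise_split (by simpa using hp)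
  refine ⟨f, t.getLast ht, A, B, ?_, hA, hB⟩
  have := List.dropLast_append_getLast ht
  rw [hAB] at this
  exact congrArg (f :: ·) this.symm

lemma pairwise_of_cut {γ f l : ℕ} {μ ν : List ℕ} (hμ : ∀ x ∈ μ, x ≤ γ) (hν : ∀ x ∈ ν, γ < x) :
    ((f :: (μ ++ ν ++ [l])).tail.dropLast).Pairwise fun x y => γ < x → γ < y := by
  have heq : (f :: (μ ++ ν ++ [l])).tail.dropLast = μ ++ ν := by
    rw [List.tail_cons, List.dropLast_concat]
  rw [heq, List.pairwise_append]
  refine ⟨List.pairwise_of_forall_mem_list fun x hx y _ hc => absurd hc (by have := hμ x hx; omega),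
    List.pairwise_of_forall_mem_list fun x _ y hy _ => hν y hy,
    fun x _ y hy _ => hν y hy⟩

lemma aux_cuttable (n : ℕ) (σ : List ℕ) (hσ : IsMultiPerm 2 n σ)
    (hfull : FullyBoundedCuttable n σ) (L' : Finset ℕ) (h2 : 2 ≤ L'.card)
    (hsub : L' ⊆ Finset.Icc 1 n) : BoundedCuttable L'.card (restrict σ L') := by
  have hL'ne : L'.Nonempty := Finset.card_pos.1 (by omega)
  set a := L'.min' hL'ne with ha
  set b := L'.max' hL'ne with hb
  have hab : a < b := L'.min'_lt_max'_of_card (by omega)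
  have haL' : a ∈ L' := L'.min'_mem hL'ne
  have hbL' : b ∈ L' := L'.max'_mem hL'ne
  have ha1 : 1 ≤ a := (Finset.mem_Icc.1 (hsub haL')).1
  have hbn : b ≤ n := (Finset.mem_Icc.1 (hsub hbL')).2
  obtain ⟨γ, hγ1, hγ2, f, l, μ, ν, hτ, hμ, hν⟩ := hfull a b ha1 hab hbn
  set K := Finset.Icc a b with hK
  have hL'K : L' ⊆ K := fun x hx => Finset.mem_Icc.2 ⟨L'.min'_le x hx, L'.le_max' x hx⟩
  set M := L'.image (rk K) with hMdef
  have hMsub : M ⊆ K.image (rk K) := Finset.image_subset_image hL'K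
  have hKfil : K.filter (fun x => rk K x ∈ M) = L' := by
    ext x
    simp only [Finset.mem_filter, hMdef, Finset.mem_image]
    constructor
    · rintro ⟨hxK, y, hyL', hyx⟩
      rwa [← rk_injOn K (hL'K hyL') hxK hyx]
    · intro hx
      exact ⟨hL'K hx, x, hx, rfl⟩
  have hrr : restrict (restrict σ K) M = restrict σ L' := by
    rw [restrict_restrict σ K M hMsub, hKfil]
  have hMcard : M.card = L'.card :=
    Finset.card_image_of_injOn ((rk_injOn K).mono (Finset.coe_subset.2 hL'K))
  have hKcard : K.card = b + 1 - a := Nat.card_Icc a b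
  have hrka : rk K a = 1 := by
    have h : K.filter (fun y => y ≤ a) = {a} := by
      ext x
      simp only [Finset.mem_filter, hK, Finset.mem_Icc, Finset.mem_singleton]
      omega
    unfold rk
    rw [h, Finset.card_singleton]
  have hrkb : rk K b = K.card := by
    unfold rk
    congr 1
    apply Finset.filter_true_of_mem
    intro x hx
    rw [hK] at hx
    exact (Finset.mem_Icc.1 hx).2
  have h1M : (1:ℕ) ∈ M := hrka ▸ Finset.mem_image_of_mem _ haL'
  have hcardM : K.card ∈ M := hrkb ▸ Finset.mem_image_of_mem _ hbL'
  have hγcard : γ < K.card := by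
    have h2K : 2 ≤ K.card := by omega
    omega
  set γ' := rk M γ with hγ'
  have hγ'1 : 1 ≤ γ' := Finset.card_pos.2 ⟨1, Finset.mem_filter.2 ⟨h1M, hγ1⟩⟩
  have hγ'lt : γ' < M.card := by
    apply Finset.card_lt_card
    refine ⟨Finset.filter_subset _ _, fun hsub' => ?_⟩
    have hmem := hsub' hcardM
    simp only [Finset.mem_filter] at hmem
    omega
  have haK : a ∈ K := hL'K haL'
  set F0 := σ.filter (fun x => decide (x ∈ K)) with hF0
  have hcountτ : 2 ≤ List.count 1 (restrict σ K) := by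
    rw [restrict_eq, ← hrka, ← hF0]
    have h1 : List.count a F0 = 2 := by
      rw [hF0, List.count_filter (by simp [haK]), hσ a, if_pos ⟨ha1, by omega⟩]
    calc (2:ℕ) = List.count a F0 := h1.symm
    _ = List.countP (fun x => x == a) F0 := List.count_eq_countP
    _ ≤ List.countP (fun x => rk K x == rk K a) F0 := by
        apply List.countP_mono_left
        intro x _ hx
        simp only [beq_iff_eq] at hx ⊢
        rw [hx]
    _ = List.countP ((fun x => x == rk K a) ∘ rk K) F0 := rfl
    _ = List.count (rk K a) (F0.map (rk K)) := by
        rw [List.count_eq_countP, List.countP_map]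
  set F := (restrict σ K).filter (fun x => decide (x ∈ M)) with hF
  have hlenF : 2 ≤ F.length := by
    have hc : List.count 1 F = List.count 1 (restrict σ K) := by
      rw [hF]; exact List.count_filter (by simp [h1M])
    have hle : List.count 1 F ≤ F.length := List.count_le_length
    omega
  have hresF : restrict (restrict σ K) M = F.map (rk M) := restrict_eq _ _
  have hpair : ((restrict σ K).tail.dropLast).Pairwise fun x y => γ < x → γ < y := by
    rw [hτ]; exact pairwise_of_cut hμ hν
  have hFsub : (F.tail.dropLast).Sublist ((restrict σ K).tail.dropLast) :=
    sublist_dropLast (sublist_tail List.filter_sublist)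
  have hFmem : ∀ x ∈ F.tail.dropLast, x ∈ M := by
    intro x hx
    have hxF : x ∈ F :=
      ((List.dropLast_sublist _).trans (List.tail_sublist F)).subset hx
    rw [hF, List.mem_filter] at hxF
    simpa using hxF.2
  have hpair' : ((F.map (rk M)).tail.dropLast).Pairwise fun x y => γ' < x → γ' < y := by
    rw [← List.map_tail, ← List.map_dropLast, List.pairwise_map]
    refine (hpair.sublist hFsub).imp_of_mem ?_
    intro x y hx hy hxy hγx
    have hyM := hFmem y hy
    have hγltx : γ < x := by
      by_contra hc
      have := rk_mono M (Nat.le_of_not_lt hc)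
      omega
    exact rk_lt M (hxy hγltx) hyM
  have hlen' : 2 ≤ (F.map (rk M)).length := by
    rw [List.length_map]; exact hlenF
  obtain ⟨f', l', μ', ν', hdec, hμ', hν'⟩ := cut_of_pairwise hlen' hpair'
  refine ⟨γ', hγ'1, by omega, f', l', μ', ν', ?_, hμ', hν'⟩
  rw [← hrr, hresF, hdec]

/-- The set of fully bounded cuttable `2`-permutations is a `2`-permutation
class: any restriction of a fully bounded cuttable `2`-permutation is fully
bounded cuttable. -/
theorem fullyBoundedCuttable_restrict (n : ℕ) (hn : 1 ≤ n) (σ : List ℕ)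
    (hσ : IsMultiPerm 2 n σ) (hfull : FullyBoundedCuttable n σ)
    (L : Finset ℕ) (hL : L.Nonempty) (hLsub : L ⊆ Finset.Icc 1 n) :
    FullyBoundedCuttable L.card (restrict σ L) := by
  intro a b ha1 hab hbL
  have hIsub : Finset.Icc a b ⊆ L.image (rk L) := by
    rw [rk_image]
    exact Finset.Icc_subset_Icc ha1 hbL
  set L' := L.filter (fun x => rk L x ∈ Finset.Icc a b) with hL'
  rw [restrict_restrict σ L (Finset.Icc a b) hIsub, ← hL']
  have himg : L'.image (rk L) = Finset.Icc a b := by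
    ext c
    simp only [Finset.mem_image, hL', Finset.mem_filter]
    constructor
    · rintro ⟨x, ⟨hxL, hxI⟩, rfl⟩
      exact hxI
    · intro hc
      obtain ⟨x, hxL, rfl⟩ := Finset.mem_image.1 (hIsub hc)
      exact ⟨x, ⟨hxL, hc⟩, rfl⟩
  have hcard : L'.card = (Finset.Icc a b).card := by
    rw [← himg,
      Finset.card_image_of_injOn ((rk_injOn L).mono (Finset.coe_subset.2 (Finset.filter_subset _ _)))]
  have h2 : 2 ≤ L'.card := by
    rw [hcard, Nat.card_Icc]
    omega
  have hsub' : L' ⊆ Finset.Icc 1 n := (Finset.filter_subset _ _).trans hLsub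
  have hres := aux_cuttable n σ hσ hfull L' h2 hsub'
  rwa [hcard] at hres
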